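/- Let A be a self-adjoint operator on H = H_A ⊗ H_B, let λmax(A) be its largest eigenvalue with eigenspace E_max(A), and let α = sup { Tr(σ A) : σ a separable density operator on H }. Then α < λmax(A) if and only if E_max(A) contains no nonzero product vector. Equivalently, the operator W = α·I − A satisfies Tr(Wσ) ≥ 0 for all separable density operators σ and Tr(Wρ) < 0 for some density operator ρ, if and only if E_max(A) is completely entangled. -/

import Mathlib

open scoped ComplexInnerProductSpace
noncomputable section

/-- `HSp n` models a complex inner product space of dimension `n`. -/
abbrev HSp (n : ℕ) := EuclideanSpace ℂ (Fin n)

/-- `HT m n` models the tensor product `HSp m ⊗ HSp n`, with its induced inner product. -/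
abbrev HT (m n : ℕ) := EuclideanSpace ℂ (Fin m × Fin n)

/-- The product (tensor) vector `a ⊗ b`. -/
def tmul {m n : ℕ} (a : HSp m) (b : HSp n) : HT m n :=
  (WithLp.equiv 2 _).symm fun p => a p.1 * b p.2

/-- `ψ` is a product vector. -/
def IsProd {m n : ℕ} (ψ : HT m n) : Prop := ∃ a b, ψ = tmul a b

/-- The rank-one operator `|ψ⟩⟨ψ| : φ ↦ ⟨ψ, φ⟩ • ψ`; for a unit vector `ψ` this is the
orthogonal projection onto the span of `ψ`. -/
def rankOne {H : Type*} [NormedAddCommGroup H] [InnerProductSpace ℂ H] (ψ : H) :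
    H →ₗ[ℂ] H := ((innerSL ℂ ψ).toLinearMap).smulRight ψ

/-- A density operator: positive semidefinite (self-adjoint) with trace one. -/
def IsDensity {H : Type*} [NormedAddCommGroup H] [InnerProductSpace ℂ H]
    [FiniteDimensional ℂ H] (ρ : H →ₗ[ℂ] H) : Prop :=
  LinearMap.IsSymmetric ρ ∧ (∀ x, 0 ≤ (⟪x, ρ x⟫).re) ∧ LinearMap.trace ℂ H ρ = 1

/-- A separable density operator: a member of the convex hull of the set of rank-one
orthogonal projections onto unit product vectors. -/
def IsSepDensity {m n : ℕ} (σ : HT m n →ₗ[ℂ] HT m n) : Prop :=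
  σ ∈ convexHull ℝ
    {P | ∃ (a : HSp m) (b : HSp n), ‖a‖ = 1 ∧ ‖b‖ = 1 ∧ P = rankOne (tmul a b)}

/-- The largest (real) eigenvalue `λmax` of an operator. -/
def lamMax {H : Type*} [NormedAddCommGroup H] [InnerProductSpace ℂ H]
    [FiniteDimensional ℂ H] (M : H →ₗ[ℂ] H) : ℝ :=
  sSup {t : ℝ | Module.End.HasEigenvalue M (t : ℂ)}

/-- `sup { Tr(σ M) : σ a separable density operator }`. -/
def sepSup {m n : ℕ} (M : HT m n →ₗ[ℂ] HT m n) : ℝ :=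
  sSup {t : ℝ | ∃ σ, IsSepDensity σ ∧ t = (LinearMap.trace ℂ _ (σ ∘ₗ M)).re}


section Aux

set_option linter.unusedSectionVars false
set_option maxHeartbeats 1000000

variable {H : Type*} [NormedAddCommGroup H] [InnerProductSpace ℂ H] [FiniteDimensional ℂ H]

lemma rankOne_apply (ψ x : H) : rankOne ψ x = ⟪ψ, x⟫ • ψ := rfl

lemma trace_eq_sum_inner {ι : Type*} [Fintype ι] [DecidableEq ι] (b : OrthonormalBasis ι ℂ H)
    (T : H →ₗ[ℂ] H) : LinearMap.trace ℂ H T = ∑ i, ⟪b i, T (b i)⟫ := by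
  rw [LinearMap.trace_eq_matrix_trace ℂ b.toBasis T, Matrix.trace]
  congr 1
  ext i
  rw [Matrix.diag_apply, LinearMap.toMatrix_apply, OrthonormalBasis.coe_toBasis_repr_apply,
    b.repr_apply_apply, OrthonormalBasis.coe_toBasis]

lemma trace_rankOne_comp (ψ : H) (M : H →ₗ[ℂ] H) :
    LinearMap.trace ℂ H (rankOne ψ ∘ₗ M) = ⟪ψ, M ψ⟫ := by
  classical
  let b := stdOrthonormalBasis ℂ H
  rw [trace_eq_sum_inner b]
  have h1 : ∀ i, ⟪b i, (rankOne ψ ∘ₗ M) (b i)⟫ = b.repr ψ i * ⟪ψ, M (b i)⟫ := by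
    intro i
    rw [LinearMap.comp_apply, rankOne_apply, inner_smul_right, b.repr_apply_apply]
    ring
  have h2 := congrArg (fun v : H => ⟪ψ, M v⟫) (b.sum_repr ψ)
  simp only [map_sum, map_smul, inner_sum, inner_smul_right] at h2
  simp_rw [h1]
  exact h2

lemma trace_rankOne (ψ : H) : LinearMap.trace ℂ H (rankOne ψ) = ((‖ψ‖ ^ 2 : ℝ) : ℂ) := by
  rw [← LinearMap.comp_id (rankOne ψ), trace_rankOne_comp]
  simpa using inner_self_eq_norm_sq_to_K (𝕜 := ℂ) ψ

lemma conj_mul_self' (c : ℂ) : (starRingEnd ℂ) c * c = ((‖c‖ ^ 2 : ℝ) : ℂ) := by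
  rw [mul_comm, Complex.mul_conj]
  norm_cast
  rw [Complex.normSq_eq_norm_sq]

lemma rankOne_isDensity (ψ : H) (hψ : ‖ψ‖ = 1) : IsDensity (rankOne ψ) := by
  refine ⟨?_, ?_, ?_⟩
  · intro x y
    simp only [rankOne_apply, inner_smul_left, inner_smul_right, inner_conj_symm]
    ring
  · intro x
    rw [rankOne_apply, inner_smul_right, mul_comm, ← inner_conj_symm x ψ, conj_mul_self',
      Complex.ofReal_re]
    positivity
  · rw [trace_rankOne, hψ]
    norm_num

lemma master [Nontrivial H] {A : H →ₗ[ℂ] H} (hA : LinearMap.IsSymmetric A) :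
    Module.End.HasEigenvalue A ((lamMax A : ℝ) : ℂ) ∧
    (∀ x : H, ⟪x, A x⟫ = (((⟪x, A x⟫).re : ℝ) : ℂ)) ∧
    (∀ x : H, ‖x‖ = 1 → (⟪x, A x⟫).re ≤ lamMax A) ∧
    (∀ x : H, ‖x‖ = 1 → (⟪x, A x⟫).re = lamMax A →
      x ∈ Module.End.eigenspace A ((lamMax A : ℝ) : ℂ)) ∧
    (∀ ρ : H →ₗ[ℂ] H, IsDensity ρ → (LinearMap.trace ℂ H (ρ ∘ₗ A)).re ≤ lamMax A) := by

  classical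
  set N := Module.finrank ℂ H with hN
  have hNpos : 0 < N := Module.finrank_pos
  haveI : Nonempty (Fin N) := ⟨⟨0, hNpos⟩⟩
  set b : OrthonormalBasis (Fin N) ℂ H := hA.eigenvectorBasis rfl with hb
  set μ : Fin N → ℝ := hA.eigenvalues rfl with hμ
  have hrepr : ∀ (x : H) (i : Fin N), b.repr (A x) i = μ i * b.repr x i :=
    fun x i => hA.eigenvectorBasis_apply_self_apply rfl x i
  have hinner : ∀ x : H, ⟪x, A x⟫ = ∑ i, ((μ i * ‖b.repr x i‖ ^ 2 : ℝ) : ℂ) := by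
    intro x
    rw [← b.repr.inner_map_map x (A x), PiLp.inner_apply]
    apply Finset.sum_congr rfl; intro i _
    rw [RCLike.inner_apply, hrepr]
    calc (μ i : ℂ) * b.repr x i * (starRingEnd ℂ) (b.repr x i)
        = (μ i : ℂ) * ((starRingEnd ℂ) (b.repr x i) * (b.repr x i)) := by ring
      _ = (μ i : ℂ) * ((‖b.repr x i‖ ^ 2 : ℝ) : ℂ) := by rw [conj_mul_self']
      _ = ((μ i * ‖b.repr x i‖ ^ 2 : ℝ) : ℂ) := by push_cast; ring
  have hnorm : ∀ x : H, ‖x‖ ^ 2 = ∑ i, ‖b.repr x i‖ ^ 2 := by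
    intro x
    rw [← b.repr.norm_map x, EuclideanSpace.norm_eq, Real.sq_sqrt (by positivity)]
  obtain ⟨i₀, hi₀⟩ := Finite.exists_max μ
  have hrange : ∀ t : ℝ, Module.End.HasEigenvalue A (t : ℂ) → ∃ i, μ i = t := by
    intro t ht
    obtain ⟨x, hx1, hx0⟩ := ht.exists_hasEigenvector
    have hx1' : A x = (t : ℂ) • x := Module.End.mem_eigenspace_iff.mp hx1
    have hs : b.repr ((t : ℂ) • x) = (t : ℂ) • b.repr x := b.repr.map_smul _ _
    have hcoef : ∀ i, (μ i : ℂ) * b.repr x i = (t : ℂ) * b.repr x i := by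
      intro i
      calc (μ i : ℂ) * b.repr x i = b.repr (A x) i := (hrepr x i).symm
        _ = b.repr ((t : ℂ) • x) i := by rw [hx1']
        _ = (t : ℂ) * b.repr x i := by rw [hs]; rfl
    have hxne : ∃ i, b.repr x i ≠ 0 := by
      by_contra hall
      push_neg at hall
      apply hx0
      have h0 : b.repr x = 0 := by ext i; exact hall i
      have h1 := congrArg b.repr.symm h0
      simpa using h1
    obtain ⟨i, hi⟩ := hxne
    exact ⟨i, Complex.ofReal_injective (mul_right_cancel₀ hi (hcoef i))⟩
  have hev_i : ∀ i, Module.End.HasEigenvalue A ((μ i : ℝ) : ℂ) :=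
    fun i => hA.hasEigenvalue_eigenvalues rfl i
  have hlam : lamMax A = μ i₀ := by
    apply le_antisymm
    · apply csSup_le ⟨μ i₀, hev_i i₀⟩
      intro t ht
      obtain ⟨i, hi⟩ := hrange t ht
      exact hi ▸ hi₀ i
    · apply le_csSup ⟨μ i₀, ?_⟩ (hev_i i₀)
      intro t ht
      obtain ⟨i, hi⟩ := hrange t ht
      exact hi ▸ hi₀ i
  have hval : ∀ x : H, (⟪x, A x⟫).re = ∑ i, μ i * ‖b.repr x i‖ ^ 2 := by
    intro x
    rw [hinner x, ← Complex.ofReal_sum, Complex.ofReal_re]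
  have hreal : ∀ x : H, ⟪x, A x⟫ = (((⟪x, A x⟫).re : ℝ) : ℂ) := by
    intro x
    rw [hinner x, ← Complex.ofReal_sum, Complex.ofReal_re]
  have hbound : ∀ x : H, ‖x‖ = 1 → (⟪x, A x⟫).re ≤ lamMax A := by
    intro x hx
    rw [hval, hlam]
    calc ∑ i, μ i * ‖b.repr x i‖ ^ 2 ≤ ∑ i, μ i₀ * ‖b.repr x i‖ ^ 2 :=
          Finset.sum_le_sum fun i _ => mul_le_mul_of_nonneg_right (hi₀ i) (by positivity)
      _ = μ i₀ * ∑ i, ‖b.repr x i‖ ^ 2 := by rw [Finset.mul_sum]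
      _ = μ i₀ := by rw [← hnorm, hx]; ring
  refine ⟨hlam ▸ hev_i i₀, hreal, hbound, ?_, ?_⟩
  · intro x hx heq
    have h1 : ∑ i, μ i * ‖b.repr x i‖ ^ 2 = μ i₀ := by rw [← hval, heq, hlam]
    have h2 : ∑ i, μ i₀ * ‖b.repr x i‖ ^ 2 = μ i₀ := by
      rw [← Finset.mul_sum, ← hnorm, hx]; ring
    have hsum0 : ∑ i, (μ i₀ - μ i) * ‖b.repr x i‖ ^ 2 = 0 := by
      have := sub_eq_zero.mpr (h2.trans h1.symm)
      rw [← Finset.sum_sub_distrib] at this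
      rw [← this]
      apply Finset.sum_congr rfl; intro i _; ring
    have hterm : ∀ i ∈ Finset.univ, (μ i₀ - μ i) * ‖b.repr x i‖ ^ 2 = 0 := by
      rw [← Finset.sum_eq_zero_iff_of_nonneg]
      · exact hsum0
      · intro i _
        exact mul_nonneg (by linarith [hi₀ i]) (by positivity)
    rw [Module.End.mem_eigenspace_iff]
    apply b.repr.injective
    ext i
    rw [map_smul, hrepr]
    have := hterm i (Finset.mem_univ i)
    rcases mul_eq_zero.mp this with h | h
    · have : μ i = μ i₀ := by linarith [sub_eq_zero.mp h]
      rw [this, hlam, PiLp.smul_apply, smul_eq_mul]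
    · have hz : b.repr x i = 0 := norm_eq_zero.mp (pow_eq_zero_iff two_ne_zero |>.mp h)
      rw [hz, PiLp.smul_apply, hz, smul_zero, mul_zero]
  · intro ρ hρ
    obtain ⟨hsym, hpsd, htr1⟩ := hρ
    have htr : (LinearMap.trace ℂ H (ρ ∘ₗ A)).re = ∑ i, μ i * (⟪b i, ρ (b i)⟫).re := by
      rw [trace_eq_sum_inner b, Complex.re_sum]
      apply Finset.sum_congr rfl; intro i _
      rw [LinearMap.comp_apply, hA.apply_eigenvectorBasis rfl i, map_smul, inner_smul_right]
      simp [Complex.mul_re]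
      rfl
    have hsum1 : ∑ i, (⟪b i, ρ (b i)⟫).re = 1 := by
      rw [trace_eq_sum_inner b] at htr1
      have h := congrArg Complex.re htr1
      simpa [Complex.re_sum] using h
    rw [htr, hlam]
    calc ∑ i, μ i * (⟪b i, ρ (b i)⟫).re ≤ ∑ i, μ i₀ * (⟪b i, ρ (b i)⟫).re :=
          Finset.sum_le_sum fun i _ => mul_le_mul_of_nonneg_right (hi₀ i) (hpsd (b i))
      _ = μ i₀ * ∑ i, (⟪b i, ρ (b i)⟫).re := by rw [Finset.mul_sum]
      _ = μ i₀ := by rw [hsum1, mul_one]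

lemma inner_eq_lamMax_of_mem {A : H →ₗ[ℂ] H} {x : H} (hx : ‖x‖ = 1)
    (hmem : x ∈ Module.End.eigenspace A ((lamMax A : ℝ) : ℂ)) :
    ⟪x, A x⟫ = ((lamMax A : ℝ) : ℂ) := by
  have h := Module.End.mem_eigenspace_iff.mp hmem
  rw [h, inner_smul_right, inner_self_eq_norm_sq_to_K, hx]
  norm_num

end Aux

section TmulAux

variable {m n : ℕ}

lemma tmul_apply (a : HSp m) (b : HSp n) (p : Fin m × Fin n) : tmul a b p = a p.1 * b p.2 := rfl

lemma inner_tmul (a a' : HSp m) (b b' : HSp n) :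
    ⟪tmul a b, tmul a' b'⟫ = ⟪a, a'⟫ * ⟪b, b'⟫ := by
  simp only [PiLp.inner_apply, RCLike.inner_apply, tmul_apply]
  rw [Fintype.sum_prod_type, Finset.sum_mul_sum]
  apply Finset.sum_congr rfl; intro i _
  apply Finset.sum_congr rfl; intro j _
  simp [map_mul]; ring

lemma norm_tmul (a : HSp m) (b : HSp n) : ‖tmul a b‖ = ‖a‖ * ‖b‖ := by
  simp only [EuclideanSpace.norm_eq]
  rw [← Real.sqrt_mul (by positivity)]
  congr 1
  rw [Fintype.sum_prod_type, Finset.sum_mul_sum]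
  apply Finset.sum_congr rfl; intro i _
  apply Finset.sum_congr rfl; intro j _
  simp [tmul_apply, mul_pow]

lemma tmul_smul_left (r : ℝ) (a : HSp m) (b : HSp n) : tmul (r • a) b = r • tmul a b := by
  ext p; simp [tmul_apply, Complex.real_smul]; ring

lemma tmul_smul_right (r : ℝ) (a : HSp m) (b : HSp n) : tmul a (r • b) = r • tmul a b := by
  ext p; simp [tmul_apply, Complex.real_smul]; ring

lemma tmul_eq_zero_iff (a : HSp m) (b : HSp n) : tmul a b = 0 ↔ a = 0 ∨ b = 0 := by
  constructor
  · intro h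
    have h2 := norm_tmul a b
    rw [h, norm_zero] at h2
    rcases mul_eq_zero.mp h2.symm with h' | h'
    · exact Or.inl (norm_eq_zero.mp h')
    · exact Or.inr (norm_eq_zero.mp h')
  · rintro (rfl | rfl) <;> (ext p; simp [tmul_apply])

/-- Bound on separable densities from a bound on unit product vectors; also trace one. -/
lemma sep_trace_le (M : HT m n →ₗ[ℂ] HT m n) {c : ℝ}
    (h : ∀ (a : HSp m) (b : HSp n), ‖a‖ = 1 → ‖b‖ = 1 →
      (⟪tmul a b, M (tmul a b)⟫).re ≤ c)
    {σ : HT m n →ₗ[ℂ] HT m n} (hσ : IsSepDensity σ) :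
    (LinearMap.trace ℂ _ (σ ∘ₗ M)).re ≤ c ∧ LinearMap.trace ℂ _ σ = 1 := by
  set S : Set (HT m n →ₗ[ℂ] HT m n) :=
    {τ | (LinearMap.trace ℂ _ (τ ∘ₗ M)).re ≤ c ∧ LinearMap.trace ℂ _ τ = 1} with hS
  have key : ∀ (p q : ℝ) (σ₁ σ₂ : HT m n →ₗ[ℂ] HT m n),
      LinearMap.trace ℂ _ ((p • σ₁ + q • σ₂) ∘ₗ M) =
        p • LinearMap.trace ℂ _ (σ₁ ∘ₗ M) + q • LinearMap.trace ℂ _ (σ₂ ∘ₗ M) := by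
    intro p q σ₁ σ₂
    rw [LinearMap.add_comp, LinearMap.smul_comp, LinearMap.smul_comp, map_add,
      LinearMap.map_smul_of_tower, LinearMap.map_smul_of_tower]
  have hconv : Convex ℝ S := by
    intro σ₁ h₁ σ₂ h₂ p q hp hq hpq
    constructor
    · have := key p q σ₁ σ₂
      rw [this]
      have : (p • LinearMap.trace ℂ _ (σ₁ ∘ₗ M) + q • LinearMap.trace ℂ _ (σ₂ ∘ₗ M)).re
          = p * (LinearMap.trace ℂ _ (σ₁ ∘ₗ M)).re + q * (LinearMap.trace ℂ _ (σ₂ ∘ₗ M)).re := by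
        simp [Complex.add_re, Complex.real_smul, Complex.re_ofReal_mul]
      rw [this]
      calc p * (LinearMap.trace ℂ _ (σ₁ ∘ₗ M)).re + q * (LinearMap.trace ℂ _ (σ₂ ∘ₗ M)).re
          ≤ p * c + q * c := by
            gcongr <;> [exact h₁.1; exact h₂.1]
        _ = c := by rw [← add_mul, hpq, one_mul]
    · rw [map_add, LinearMap.map_smul_of_tower, LinearMap.map_smul_of_tower, h₁.2, h₂.2]
      simp [Complex.real_smul]
      norm_cast
  have hgen : {P | ∃ (a : HSp m) (b : HSp n), ‖a‖ = 1 ∧ ‖b‖ = 1 ∧ P = rankOne (tmul a b)} ⊆ S := by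
    rintro P ⟨a, b, ha, hb, rfl⟩
    constructor
    · rw [trace_rankOne_comp]
      exact h a b ha hb
    · rw [trace_rankOne, norm_tmul, ha, hb]
      norm_num
  exact convexHull_min hgen hconv hσ

end TmulAux

set_option maxHeartbeats 4000000

/-- For a self-adjoint operator `A` on `H_A ⊗ H_B`, with
`α = sup { Tr(σA) : σ separable }`, one has `α < λmax(A)` iff the eigenspace `E_max(A)` of
the largest eigenvalue contains no nonzero product vector; equivalently, `W = α·I − A` is
nonnegative on separable density operators and strictly negative on some density operator
iff `E_max(A)` is completely entangled. -/
theorem stmt_2 {dA dB : ℕ} (hdA : 2 ≤ dA) (hdB : 2 ≤ dB)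
    (A : HT dA dB →ₗ[ℂ] HT dA dB) (hA : LinearMap.IsSymmetric A) :
    (sepSup A < lamMax A ↔
      ∀ ψ ∈ Module.End.eigenspace A ((lamMax A : ℝ) : ℂ), ψ ≠ 0 → ¬ IsProd ψ) ∧
    (((∀ σ : HT dA dB →ₗ[ℂ] HT dA dB, IsSepDensity σ →
          0 ≤ (LinearMap.trace ℂ _
            (σ ∘ₗ (sepSup A • (LinearMap.id : HT dA dB →ₗ[ℂ] HT dA dB) - A))).re) ∧
        (∃ ρ : HT dA dB →ₗ[ℂ] HT dA dB, IsDensity ρ ∧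
          (LinearMap.trace ℂ _
            (ρ ∘ₗ (sepSup A • (LinearMap.id : HT dA dB →ₗ[ℂ] HT dA dB) - A))).re < 0)) ↔
      ∀ ψ ∈ Module.End.eigenspace A ((lamMax A : ℝ) : ℂ), ψ ≠ 0 → ¬ IsProd ψ) := by
  classical
  set α := sepSup A with hα
  set lam := lamMax A with hlam
  -- nontriviality
  have hdA0 : 0 < dA := by omega
  have hdB0 : 0 < dB := by omega
  haveI : Nontrivial (HT dA dB) := by
    refine ⟨0, EuclideanSpace.single (⟨0, hdA0⟩, ⟨0, hdB0⟩) (1 : ℂ), fun h => ?_⟩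
    have := congrArg norm h
    rw [norm_zero, EuclideanSpace.norm_single] at this
    norm_num at this
  obtain ⟨hev, hreal, hbound, heqcase, hdens⟩ := master hA
  -- unit vectors
  set a₁ : HSp dA := EuclideanSpace.single ⟨0, hdA0⟩ (1 : ℂ) with ha₁
  set b₁ : HSp dB := EuclideanSpace.single ⟨0, hdB0⟩ (1 : ℂ) with hb₁
  have ha₁n : ‖a₁‖ = 1 := by rw [ha₁, EuclideanSpace.norm_single]; norm_num
  have hb₁n : ‖b₁‖ = 1 := by rw [hb₁, EuclideanSpace.norm_single]; norm_num
  -- the set defining sepSup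
  set T : Set ℝ := {t : ℝ | ∃ σ, IsSepDensity σ ∧ t = (LinearMap.trace ℂ _ (σ ∘ₗ A)).re} with hT
  have hrankOneSep : ∀ (a : HSp dA) (b : HSp dB), ‖a‖ = 1 → ‖b‖ = 1 →
      IsSepDensity (rankOne (tmul a b)) := by
    intro a b ha hb
    exact subset_convexHull ℝ _ ⟨a, b, ha, hb, rfl⟩
  have hmemT : ∀ (a : HSp dA) (b : HSp dB), ‖a‖ = 1 → ‖b‖ = 1 →
      (⟪tmul a b, A (tmul a b)⟫).re ∈ T := by
    intro a b ha hb
    exact ⟨rankOne (tmul a b), hrankOneSep a b ha hb, by rw [trace_rankOne_comp]⟩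
  have hTne : T.Nonempty := ⟨_, hmemT a₁ b₁ ha₁n hb₁n⟩
  have hprodbound : ∀ (a : HSp dA) (b : HSp dB), ‖a‖ = 1 → ‖b‖ = 1 →
      (⟪tmul a b, A (tmul a b)⟫).re ≤ lam := by
    intro a b ha hb
    exact hbound _ (by rw [norm_tmul, ha, hb, one_mul])
  have hTub : ∀ t ∈ T, t ≤ lam := by
    rintro t ⟨σ, hσ, rfl⟩
    exact (sep_trace_le A hprodbound hσ).1
  have hTbdd : BddAbove T := ⟨lam, hTub⟩
  have hαle : α ≤ lam := csSup_le hTne hTub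
  have hαub : ∀ t ∈ T, t ≤ α := fun t ht => le_csSup hTbdd ht
  -- First iff
  have main1 : α < lam ↔
      ∀ ψ ∈ Module.End.eigenspace A ((lam : ℝ) : ℂ), ψ ≠ 0 → ¬ IsProd ψ := by
    constructor
    · intro hlt ψ hmem hne hprod
      obtain ⟨a, b, rfl⟩ := hprod
      have hab := (not_iff_not.mpr (tmul_eq_zero_iff a b)).mp hne
      push_neg at hab
      obtain ⟨ha0, hb0⟩ := hab
      have han : (0:ℝ) < ‖a‖ := norm_pos_iff.mpr ha0
      have hbn : (0:ℝ) < ‖b‖ := norm_pos_iff.mpr hb0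
      set a' : HSp dA := ‖a‖⁻¹ • a with ha'
      set b' : HSp dB := ‖b‖⁻¹ • b with hb'
      have ha'n : ‖a'‖ = 1 := by
        rw [ha', norm_smul, norm_inv, norm_norm, inv_mul_cancel₀ (ne_of_gt han)]
      have hb'n : ‖b'‖ = 1 := by
        rw [hb', norm_smul, norm_inv, norm_norm, inv_mul_cancel₀ (ne_of_gt hbn)]
      have hψ' : tmul a' b' = (‖a‖⁻¹ * ‖b‖⁻¹) • tmul a b := by
        rw [ha', hb', tmul_smul_left, tmul_smul_right, smul_smul]
      have hmem' : tmul a' b' ∈ Module.End.eigenspace A ((lam : ℝ) : ℂ) := by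
        rw [hψ']
        exact Submodule.smul_of_tower_mem _ _ hmem
      have hn' : ‖tmul a' b'‖ = 1 := by rw [norm_tmul, ha'n, hb'n, one_mul]
      have hval : (⟪tmul a' b', A (tmul a' b')⟫).re = lam := by
        rw [inner_eq_lamMax_of_mem hn' hmem', Complex.ofReal_re]
      have : lam ≤ α := hval ▸ hαub _ (hmemT a' b' ha'n hb'n)
      exact absurd hlt (not_lt.mpr this)
    · intro hces
      -- compactness argument
      set K : Set (HSp dA × HSp dB) :=
        (Metric.sphere (0 : HSp dA) 1) ×ˢ (Metric.sphere (0 : HSp dB) 1) with hK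
      have hKc : IsCompact K := (isCompact_sphere _ _).prod (isCompact_sphere _ _)
      have hKne : K.Nonempty := ⟨(a₁, b₁), mem_sphere_zero_iff_norm.mpr ha₁n,
        mem_sphere_zero_iff_norm.mpr hb₁n⟩
      set f : HSp dA × HSp dB → ℝ :=
        fun x => (⟪tmul x.1 x.2, A (tmul x.1 x.2)⟫).re with hf
      have htmulcont : Continuous fun x : HSp dA × HSp dB => tmul x.1 x.2 := by
        apply (PiLp.continuous_toLp 2 _).comp
        apply continuous_pi
        intro p
        have h1 : Continuous fun x : HSp dA × HSp dB => x.1 p.1 :=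
          ((continuous_apply p.1).comp (PiLp.continuous_ofLp 2 _)).comp continuous_fst
        have h2 : Continuous fun x : HSp dA × HSp dB => x.2 p.2 :=
          ((continuous_apply p.2).comp (PiLp.continuous_ofLp 2 _)).comp continuous_snd
        exact h1.mul h2
      have hfc : Continuous f := by
        apply Complex.continuous_re.comp
        exact continuous_inner.comp
          (htmulcont.prodMk ((A.continuous_of_finiteDimensional).comp htmulcont))
      obtain ⟨z, hzK, hzmax⟩ := hKc.exists_isMaxOn hKne hfc.continuousOn
      have hzmax' : ∀ x ∈ K, f x ≤ f z := hzmax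
      have hz1 : ‖z.1‖ = 1 := mem_sphere_zero_iff_norm.mp hzK.1
      have hz2 : ‖z.2‖ = 1 := mem_sphere_zero_iff_norm.mp hzK.2
      set μ := f z with hμdef
      have hμlam : μ < lam := by
        rcases lt_or_eq_of_le (hprodbound z.1 z.2 hz1 hz2) with h | h
        · exact h
        · exfalso
          have hn : ‖tmul z.1 z.2‖ = 1 := by rw [norm_tmul, hz1, hz2, one_mul]
          have hmem := heqcase (tmul z.1 z.2) hn h
          have hne : tmul z.1 z.2 ≠ 0 := by
            intro h0
            rw [h0, norm_zero] at hn
            norm_num at hn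
          exact hces _ hmem hne ⟨z.1, z.2, rfl⟩
      have hub2 : ∀ (a : HSp dA) (b : HSp dB), ‖a‖ = 1 → ‖b‖ = 1 →
          (⟪tmul a b, A (tmul a b)⟫).re ≤ μ := by
        intro a b ha hb
        exact hzmax' (a, b) ⟨mem_sphere_zero_iff_norm.mpr ha, mem_sphere_zero_iff_norm.mpr hb⟩
      have hαμ : α ≤ μ := by
        apply csSup_le hTne
        rintro t ⟨σ, hσ, rfl⟩
        exact (sep_trace_le A hub2 hσ).1
      exact lt_of_le_of_lt hαμ hμlam
  refine ⟨main1, ?_⟩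
  -- second iff
  set W : HT dA dB →ₗ[ℂ] HT dA dB :=
    α • (LinearMap.id : HT dA dB →ₗ[ℂ] HT dA dB) - A with hW
  have hWtr : ∀ σ : HT dA dB →ₗ[ℂ] HT dA dB,
      LinearMap.trace ℂ _ (σ ∘ₗ W) = α • LinearMap.trace ℂ _ σ - LinearMap.trace ℂ _ (σ ∘ₗ A) := by
    intro σ
    have : σ ∘ₗ W = α • σ - σ ∘ₗ A := by
      ext x
      simp [hW, LinearMap.comp_apply, LinearMap.sub_apply, LinearMap.smul_apply, map_sub]
    rw [this, map_sub, LinearMap.map_smul_of_tower]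
  rw [← main1]
  constructor
  · rintro ⟨hpos, ρ, hρ, hneg⟩
    rw [hWtr ρ, hρ.2.2] at hneg
    have h1 : (α • (1:ℂ) - LinearMap.trace ℂ _ (ρ ∘ₗ A)).re
        = α - (LinearMap.trace ℂ _ (ρ ∘ₗ A)).re := by
      simp [Complex.sub_re, Complex.real_smul]
    rw [h1] at hneg
    have h2 : α < (LinearMap.trace ℂ _ (ρ ∘ₗ A)).re := by linarith
    exact lt_of_lt_of_le h2 (hdens ρ hρ)
  · intro hlt
    constructor
    · intro σ hσ
      obtain ⟨hle, htr1⟩ := sep_trace_le A hprodbound hσ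
      have hle2 : (LinearMap.trace ℂ _ (σ ∘ₗ A)).re ≤ α :=
        hαub _ ⟨σ, hσ, rfl⟩
      rw [hWtr σ, htr1]
      have h1 : (α • (1:ℂ) - LinearMap.trace ℂ _ (σ ∘ₗ A)).re
          = α - (LinearMap.trace ℂ _ (σ ∘ₗ A)).re := by
        simp [Complex.sub_re, Complex.real_smul]
      rw [h1]
      linarith
    · obtain ⟨x, hx⟩ := hev.exists_hasEigenvector
      have hx0 : x ≠ 0 := hx.2
      have hxpos : (0:ℝ) < ‖x‖ := norm_pos_iff.mpr hx0
      set ψ : HT dA dB := ‖x‖⁻¹ • x with hψ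
      have hψn : ‖ψ‖ = 1 := by
        rw [hψ, norm_smul, norm_inv, norm_norm, inv_mul_cancel₀ (ne_of_gt hxpos)]
      have hψmem : ψ ∈ Module.End.eigenspace A ((lam : ℝ) : ℂ) :=
        Submodule.smul_of_tower_mem _ _ hx.1
      refine ⟨rankOne ψ, rankOne_isDensity ψ hψn, ?_⟩
      rw [hWtr, trace_rankOne_comp, trace_rankOne, hψn,
        inner_eq_lamMax_of_mem hψn hψmem]
      have hre : (α • ((((1:ℝ) ^ 2 : ℝ)) : ℂ) - ((lamMax A : ℝ) : ℂ)).re = α - lamMax A := by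
        simp [Complex.real_smul]
      rw [hre]
      rw [hlam] at hlt
      linarith
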